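/- Let G be a mixed signed, directed graph and let G~ be its augmented signed graph, obtained by replacing each directed edge (i,j) by a new vertex t and signed edges -it and +tj. Then k[G~] ∩ k[x_1^{±1},...,x_n^{±1}] = k[G], where the intersection is taken inside the Laurent ring including the new variables t_e. -/

import Mathlib

open Finset

/-- A signed graph: an undirected graph (possibly with loops) together with a
sign attached to each edge. -/
structure SignedGraph (V : Type) where
  edges : Finset (Sym2 V)
  sgn : Sym2 V → ℤ

namespace SignedGraph

variable {V : Type} [DecidableEq V]

/-- The sign function takes only the values `1` and `-1` on edges. -/
def Proper (G : SignedGraph V) : Prop :=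
  ∀ e ∈ G.edges, G.sgn e = 1 ∨ G.sgn e = -1

/-- `e_i + e_j` for the edge `ij` (a loop `ii` gives `2 e_i`). -/
def endSum : Sym2 V → (V → ℤ) :=
  Sym2.lift ⟨fun i j => Pi.single i 1 + Pi.single j 1, fun i j => add_comm _ _⟩

/-- `ρ(±ij) = sgn(ij)(e_i + e_j)`. -/
def rho (G : SignedGraph V) (e : Sym2 V) : V → ℤ := G.sgn e • endSum e

/-- A walk of length `len` in `G`, recorded by its vertex sequence. -/
structure Walk (G : SignedGraph V) (len : ℕ) where
  vert : ℕ → V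
  mem : ∀ i < len, s(vert i, vert (i + 1)) ∈ G.edges

namespace Walk

variable {G : SignedGraph V} {l l₁ l₂ : ℕ}

/-- The `i`-th edge of a walk. -/
def edge (W : G.Walk l) (i : ℕ) : Sym2 V := s(W.vert i, W.vert (i + 1))

def IsClosed (W : G.Walk l) : Prop := W.vert l = W.vert 0

/-- A cycle: a closed walk of positive length with pairwise distinct vertices
(length 2 is excluded since it would repeat an edge). -/
def IsCycle (W : G.Walk l) : Prop :=
  W.IsClosed ∧ 0 < l ∧ l ≠ 2 ∧ ∀ i < l, ∀ j < l, W.vert i = W.vert j → i = j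

/-- A path: a walk with pairwise distinct vertices. -/
def IsPath (W : G.Walk l) : Prop :=
  ∀ i ≤ l, ∀ j ≤ l, W.vert i = W.vert j → i = j

/-- The signs of consecutive edges alternate along the walk. -/
def Alternating (W : G.Walk l) : Prop :=
  ∀ i, i + 1 < l → G.sgn (W.edge (i + 1)) = -G.sgn (W.edge i)

/-- The signature of the vertex at position `i` of a cycle: the average of the
signs of the two incident edges of the cycle. -/
def sig (W : G.Walk l) (i : ℕ) : ℤ :=
  (G.sgn (W.edge ((i + l - 1) % l)) + G.sgn (W.edge (i % l))) / 2

/-- The exponent vector `∑_{v ∈ C} sig_C(v)·e_v` of the monomial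
`∏_{v ∈ C} x_v^{sig_C(v)}` attached to a cycle. -/
def cycVec (W : G.Walk l) : V → ℤ :=
  fun v => ∑ i ∈ Finset.range l, if W.vert i = v then W.sig i else 0

def edgeFinset (W : G.Walk l) : Finset (Sym2 V) := (Finset.range l).image W.edge

def edgeMS (W : G.Walk l) : Multiset (Sym2 V) := ((List.range l).map W.edge : Multiset (Sym2 V))

def HasVert (W : G.Walk l) (v : V) : Prop := ∃ i < l, W.vert i = v

/-- A reducing closed walk: a closed walk of even length such that whenever an
edge appears at two positions, the number of edges strictly between the two
occurrences is odd. -/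
def ReducingClosedWalk (W : G.Walk l) : Prop :=
  W.IsClosed ∧ Even l ∧
    ∀ i j, i < j → j < l → W.edge i = W.edge j → Odd (j - i - 1)

end Walk

/-- Two vertices lie in the same component iff some walk joins them. -/
def SameComponent (G : SignedGraph V) (u v : V) : Prop :=
  ∃ (n : ℕ) (W : G.Walk n), W.vert 0 = u ∧ W.vert n = v

/-- Two cycles are (vertex-)disjoint. -/
def DisjointCycles {G : SignedGraph V} {l₁ l₂ : ℕ} (C : G.Walk l₁) (C' : G.Walk l₂) : Prop :=
  ∀ i < l₁, ∀ j < l₂, C.vert i ≠ C'.vert j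

/-- There is a sign-alternating path from a vertex of `C` to a vertex of `C'`. -/
def AltPathBetween (G : SignedGraph V) {l₁ l₂ : ℕ} (C : G.Walk l₁) (C' : G.Walk l₂) : Prop :=
  ∃ (p : ℕ) (P : G.Walk p), P.IsPath ∧ P.Alternating ∧
    (∃ i < l₁, P.vert 0 = C.vert i) ∧ (∃ j < l₂, P.vert p = C'.vert j)

/-- The odd cycle condition for signed graphs. -/
def OddCycleCondition (G : SignedGraph V) : Prop :=
  ∀ (l₁ l₂ : ℕ) (C : G.Walk l₁) (C' : G.Walk l₂),
    C.IsCycle → C'.IsCycle → Odd l₁ → Odd l₂ → DisjointCycles C C' →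
    G.SameComponent (C.vert 0) (C'.vert 0) → AltPathBetween G C C'

end SignedGraph

/-- The monomial `x^z` in the Laurent polynomial ring
`k[x_v^{±1} : v ∈ V] = k[(V → ℤ)]`. -/
noncomputable def mono (k : Type) [Field k] {V : Type} (z : V → ℤ) :
    AddMonoidAlgebra k (V → ℤ) :=
  AddMonoidAlgebra.single z 1

/-- The edge ring `k[G]` of a signed graph, generated by the monomials
`(x_i x_j)^{sgn(ij)}` over the edges of `G`. -/
noncomputable def edgeRing (k : Type) [Field k] {V : Type} [DecidableEq V] (G : SignedGraph V) :
    Subalgebra k (AddMonoidAlgebra k (V → ℤ)) :=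
  Algebra.adjoin k ((fun e => mono k (G.rho e)) '' ↑G.edges)
/-- A mixed signed, directed graph: signed edges and directed edges. -/
structure MixedGraph (V : Type) where
  sedges : Finset (Sym2 V)
  sgn : Sym2 V → ℤ
  dedges : Finset (V × V)

/-- The sign function takes values `±1` on signed edges, and there are no
directed loops. -/
def MixedGraph.Proper {V : Type} (G : MixedGraph V) : Prop :=
  (∀ e ∈ G.sedges, G.sgn e = 1 ∨ G.sgn e = -1) ∧ ∀ d ∈ G.dedges, d.1 ≠ d.2

/-- Projection from the augmented vertex set back to `V`. -/
def aproj {V : Type} : V ⊕ (V × V) → V := Sum.elim id Prod.fst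

open scoped Classical in
/-- The augmented signed graph of a mixed signed, directed graph: each directed
edge `(i,j)` is replaced by an artificial vertex `t = (i,j)` together with the
signed edges `-it` and `+tj`. -/
noncomputable def MixedGraph.augment {V : Type} [DecidableEq V] (G : MixedGraph V) :
    SignedGraph (V ⊕ (V × V)) where
  edges :=
    G.sedges.image (Sym2.map Sum.inl) ∪
      G.dedges.image (fun d => s((Sum.inl d.1 : V ⊕ (V × V)), Sum.inr d)) ∪
      G.dedges.image (fun d => s((Sum.inr d : V ⊕ (V × V)), Sum.inl d.2))
  sgn := fun e =>
    if ∃ d ∈ G.dedges, e = s((Sum.inl d.1 : V ⊕ (V × V)), Sum.inr d) then -1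
    else if ∃ d ∈ G.dedges, e = s((Sum.inr d : V ⊕ (V × V)), Sum.inl d.2) then 1
    else G.sgn (e.map aproj)

/-- The exponent vector `e_j - e_i` of the generator `x_i⁻¹ x_j` of a directed
edge `(i,j)`. -/
def dirVec {V : Type} [DecidableEq V] (d : V × V) : V → ℤ :=
  Pi.single d.2 1 - Pi.single d.1 1

/-- The edge ring of a mixed signed, directed graph, generated by
`(x_i x_j)^{sgn(ij)}` over signed edges and `x_i⁻¹ x_j` over directed edges. -/
noncomputable def mixedEdgeRing (k : Type) [Field k] {V : Type} [DecidableEq V]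
    (G : MixedGraph V) : Subalgebra k (AddMonoidAlgebra k (V → ℤ)) :=
  Algebra.adjoin k
    ((fun e => mono k (G.sgn e • SignedGraph.endSum e)) '' ↑G.sedges ∪
      (fun d => mono k (dirVec d)) '' ↑G.dedges)


/-- Extension of an exponent vector on `V` by zero on the artificial
vertices. -/
def extHom {V : Type} : (V → ℤ) →+ ((V ⊕ (V × V)) → ℤ) where
  toFun z := Sum.elim z 0
  map_zero' := by funext w; cases w <;> rfl
  map_add' a b := by funext w; cases w <;> simp

section Aux

variable {V : Type} [DecidableEq V] (k : Type) [Field k]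

@[simp] lemma extHom_apply_inr (w : V → ℤ) (d : V × V) : extHom w (Sum.inr d) = 0 := rfl

@[simp] lemma extHom_apply_inl (w : V → ℤ) (v : V) : extHom w (Sum.inl v) = w v := rfl

lemma extHom_single (v : V) (c : ℤ) :
    extHom (Pi.single v c) = Pi.single (Sum.inl v : V ⊕ (V × V)) c := by
  classical
  funext x
  cases x with
  | inl u => simp [Pi.single_apply]
  | inr d => simp [Pi.single_apply]

lemma endSum_mk (a b : V ⊕ (V × V)) :
    SignedGraph.endSum s(a, b) = Pi.single a 1 + Pi.single b 1 := rfl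

lemma endSum_mk' (a b : V) :
    SignedGraph.endSum s(a, b) = Pi.single a 1 + Pi.single b 1 := rfl

lemma extHom_dirVec (d : V × V) :
    extHom (dirVec d) =
      Pi.single (Sum.inl d.2 : V ⊕ (V × V)) 1 - Pi.single (Sum.inl d.1) 1 := by
  rw [dirVec, map_sub, extHom_single, extHom_single]

lemma mono_add (z w : V → ℤ) : mono k (z + w) = mono k z * mono k w := by
  rw [mono, mono, mono, AddMonoidAlgebra.single_mul_single, one_mul]

lemma mono_zero : (mono k (0 : V → ℤ)) = 1 := rfl

/-- Generic: monomials with exponent in the additive closure lie in the adjoin. -/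
lemma mono_mem_adjoin {M : Type} [AddCommMonoid M] (Z : Set M) {w : M}
    (hw : w ∈ AddSubmonoid.closure Z) :
    (AddMonoidAlgebra.single w 1 : AddMonoidAlgebra k M) ∈
      Algebra.adjoin k ((fun z => (AddMonoidAlgebra.single z 1 : AddMonoidAlgebra k M)) '' Z) := by
  induction hw using AddSubmonoid.closure_induction with
  | mem z hz => exact Algebra.subset_adjoin ⟨z, hz, rfl⟩
  | zero => exact (AddMonoidAlgebra.one_def (R := k) (M := M)) ▸ one_mem _
  | add x y hx hy ihx ihy =>
      have : (AddMonoidAlgebra.single (x + y) 1 : AddMonoidAlgebra k M) =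
          AddMonoidAlgebra.single x 1 * AddMonoidAlgebra.single y 1 := by
        rw [AddMonoidAlgebra.single_mul_single, one_mul]
      rw [this]
      exact mul_mem ihx ihy

/-- Generic: elements of the adjoin of monomials are supported in the closure. -/
lemma support_subset_closure {M : Type} [AddCommMonoid M] (Z : Set M)
    {a : AddMonoidAlgebra k M}
    (ha : a ∈ Algebra.adjoin k
      ((fun z => (AddMonoidAlgebra.single z 1 : AddMonoidAlgebra k M)) '' Z)) :
    ↑a.coeff.support ⊆ (AddSubmonoid.closure Z : Set M) := by
  classical
  induction ha using Algebra.adjoin_induction with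
  | mem x hx =>
      obtain ⟨z, hz, rfl⟩ := hx
      intro m hm
      have := Finsupp.support_single_subset (a := z) (b := (1 : k)) hm
      rw [Finset.mem_singleton] at this
      subst this
      exact AddSubmonoid.subset_closure hz
  | algebraMap r =>
      intro m hm
      simp only [AddMonoidAlgebra.coe_algebraMap, Function.comp_apply] at hm
      have := Finsupp.support_single_subset (a := (0 : M)) (b := algebraMap k k r) hm
      rw [Finset.mem_singleton] at this
      subst this
      exact zero_mem _
  | add x y hx hy ihx ihy =>
      intro m hm
      have := Finsupp.support_add (g₁ := x.coeff) (g₂ := y.coeff) hm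
      rw [Finset.mem_union] at this
      rcases this with h | h
      · exact ihx h
      · exact ihy h
  | mul x y hx hy ihx ihy =>
      intro m hm
      have := AddMonoidAlgebra.support_coeff_mul_subset x y hm
      rw [Finset.mem_add] at this
      obtain ⟨u, hu, v, hv, rfl⟩ := this
      exact add_mem (ihx hu) (ihy hv)

variable {G : MixedGraph V}

lemma mem_aug_inl {e : Sym2 V} (he : e ∈ G.sedges) :
    Sym2.map Sum.inl e ∈ G.augment.edges := by
  refine Finset.mem_union.2 (Or.inl (Finset.mem_union.2 (Or.inl ?_)))
  exact Finset.mem_image_of_mem _ he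

lemma mem_aug_neg {d : V × V} (hd : d ∈ G.dedges) :
    s((Sum.inl d.1 : V ⊕ (V × V)), Sum.inr d) ∈ G.augment.edges := by
  refine Finset.mem_union.2 (Or.inl (Finset.mem_union.2 (Or.inr ?_)))
  exact Finset.mem_image_of_mem _ hd

lemma mem_aug_pos {d : V × V} (hd : d ∈ G.dedges) :
    s((Sum.inr d : V ⊕ (V × V)), Sum.inl d.2) ∈ G.augment.edges := by
  exact Finset.mem_union.2 (Or.inr (Finset.mem_image_of_mem _ hd))

lemma aug_sgn_inl (e : Sym2 V) :
    G.augment.sgn (Sym2.map Sum.inl e) = G.sgn e := by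
  induction e using Sym2.ind with
  | _ i j =>
    simp only [MixedGraph.augment, Sym2.map_pair_eq]
    rw [if_neg, if_neg]
    · rfl
    · rintro ⟨d, _, h⟩
      rw [Sym2.eq_iff] at h
      rcases h with ⟨h, -⟩ | ⟨-, h⟩ <;> exact Sum.inl_ne_inr h
    · rintro ⟨d, _, h⟩
      rw [Sym2.eq_iff] at h
      rcases h with ⟨-, h⟩ | ⟨h, -⟩ <;> exact Sum.inl_ne_inr h

lemma aug_sgn_neg {d : V × V} (hd : d ∈ G.dedges) :
    G.augment.sgn s((Sum.inl d.1 : V ⊕ (V × V)), Sum.inr d) = -1 := by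
  simp only [MixedGraph.augment]
  rw [if_pos ⟨d, hd, rfl⟩]

lemma aug_sgn_pos (hG : G.Proper) {d : V × V} (hd : d ∈ G.dedges) :
    G.augment.sgn s((Sum.inr d : V ⊕ (V × V)), Sum.inl d.2) = 1 := by
  simp only [MixedGraph.augment]
  rw [if_neg, if_pos ⟨d, hd, rfl⟩]
  rintro ⟨d', hd', h⟩
  rw [Sym2.eq_iff] at h
  rcases h with ⟨h, -⟩ | ⟨h1, h2⟩
  · exact Sum.inr_ne_inl h
  · have hdd : d = d' := Sum.inr.inj h1
    rw [← hdd] at h2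
    exact hG.2 d hd (Sum.inl.inj h2).symm

lemma rho_inl {e : Sym2 V} :
    G.augment.rho (Sym2.map Sum.inl e) = extHom (G.sgn e • SignedGraph.endSum e) := by
  rw [SignedGraph.rho, aug_sgn_inl, map_zsmul]
  congr 1
  induction e using Sym2.ind with
  | _ i j =>
    rw [Sym2.map_pair_eq, endSum_mk, endSum_mk', map_add, extHom_single, extHom_single]

lemma rho_neg {d : V × V} (hd : d ∈ G.dedges) :
    G.augment.rho s((Sum.inl d.1 : V ⊕ (V × V)), Sum.inr d) =
      -(Pi.single (Sum.inl d.1 : V ⊕ (V × V)) 1 + Pi.single (Sum.inr d) 1) := by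
  rw [SignedGraph.rho, aug_sgn_neg hd, endSum_mk, neg_smul, one_smul]

lemma rho_pos (hG : G.Proper) {d : V × V} (hd : d ∈ G.dedges) :
    G.augment.rho s((Sum.inr d : V ⊕ (V × V)), Sum.inl d.2) =
      Pi.single (Sum.inr d : V ⊕ (V × V)) 1 + Pi.single (Sum.inl d.2) 1 := by
  rw [SignedGraph.rho, aug_sgn_pos hG hd, endSum_mk, one_smul]

/-- The exponent vector of the generator `+tj` of a directed edge `d = (i,j)`. -/
def rhoPosVec (d : V × V) : (V ⊕ (V × V)) → ℤ :=
  Pi.single (Sum.inr d : V ⊕ (V × V)) 1 + Pi.single (Sum.inl d.2) 1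

/-- The set of exponent vectors of generators of the mixed edge ring. -/
def mixedVecs (G : MixedGraph V) : Set (V → ℤ) :=
  (fun e => G.sgn e • SignedGraph.endSum e) '' ↑G.sedges ∪ dirVec '' ↑G.dedges

lemma lincomb_apply_inr (f : (V × V) →₀ ℤ) (d : V × V) :
    Finsupp.linearCombination ℤ rhoPosVec f (Sum.inr d) = f d := by
  classical
  rw [Finsupp.linearCombination_apply, Finsupp.sum, Finset.sum_apply]
  have h : ∀ d' ∈ f.support, (f d' • rhoPosVec d') (Sum.inr d)
      = if d' = d then f d' else 0 := by
    intro d' _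
    simp only [Pi.smul_apply, rhoPosVec, Pi.add_apply, Pi.single_apply, smul_eq_mul]
    by_cases h : d' = d
    · subst h; simp
    · simp [h, Ne.symm h]
  rw [Finset.sum_congr rfl h, Finset.sum_ite_eq' f.support d fun d' => f d']
  split_ifs with h
  · rfl
  · exact (Finsupp.notMem_support_iff.1 h).symm

lemma closure_aug_decomp (hG : G.Proper) {z : (V ⊕ (V × V)) → ℤ}
    (hz : z ∈ AddSubmonoid.closure (G.augment.rho '' ↑G.augment.edges)) :
    ∃ w ∈ AddSubmonoid.closure (mixedVecs G), ∃ f : (V × V) →₀ ℤ,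
      z = extHom w + Finsupp.linearCombination ℤ rhoPosVec f := by
  induction hz using AddSubmonoid.closure_induction with
  | mem z hz =>
      obtain ⟨e, he, rfl⟩ := hz
      have he' := he
      rw [MixedGraph.augment] at he'
      simp only [Finset.mem_union, Finset.mem_image, Finset.mem_coe] at he'
      rcases he' with (⟨e', he', rfl⟩ | ⟨d, hd, rfl⟩) | ⟨d, hd, rfl⟩
      · refine ⟨G.sgn e' • SignedGraph.endSum e',
          AddSubmonoid.subset_closure (Or.inl ⟨e', he', rfl⟩), 0, ?_⟩
        rw [rho_inl, map_zero, add_zero]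
      · refine ⟨dirVec d, AddSubmonoid.subset_closure (Or.inr ⟨d, hd, rfl⟩),
          Finsupp.single d (-1), ?_⟩
        rw [rho_neg hd, Finsupp.linearCombination_single, extHom_dirVec]
        show _ = _ + (-1 : ℤ) • rhoPosVec d
        rw [neg_smul, one_smul, rhoPosVec]
        abel
      · refine ⟨0, zero_mem _, Finsupp.single d 1, ?_⟩
        rw [rho_pos hG hd, Finsupp.linearCombination_single, one_smul, map_zero, zero_add,
          rhoPosVec]
  | zero =>
      exact ⟨0, zero_mem _, 0, by rw [map_zero, map_zero, add_zero]⟩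
  | add x y hx hy ihx ihy =>
      obtain ⟨w₁, hw₁, f₁, rfl⟩ := ihx
      obtain ⟨w₂, hw₂, f₂, rfl⟩ := ihy
      refine ⟨w₁ + w₂, add_mem hw₁ hw₂, f₁ + f₂, ?_⟩
      rw [map_add, map_add]
      abel

end Aux

/-- intersecting the edge ring of the augmented signed graph with
the Laurent subring in the original variables recovers the edge ring of the
mixed graph. -/
theorem statement13 {V : Type} [DecidableEq V] (k : Type) [Field k]
    (G : MixedGraph V) (hG : G.Proper) :
    {a : AddMonoidAlgebra k ((V ⊕ (V × V)) → ℤ) |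
        a ∈ edgeRing k G.augment ∧
          ∀ f ∈ (a.coeff : ((V ⊕ (V × V)) → ℤ) →₀ k).support, ∀ d : V × V, f (Sum.inr d) = 0} =
      (AddMonoidAlgebra.mapDomainAlgHom k k (extHom (V := V))) '' ↑(mixedEdgeRing k G) := by
  classical
  have hφ : ∀ c : AddMonoidAlgebra k (V → ℤ),
      (AddMonoidAlgebra.mapDomainAlgHom k k (extHom (V := V))) c =
        AddMonoidAlgebra.mapDomain (extHom (V := V)) c := fun _ => rfl
  have hmix : mixedEdgeRing k G =
      Algebra.adjoin k
        ((fun z => (AddMonoidAlgebra.single z 1 : AddMonoidAlgebra k (V → ℤ))) ''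
          mixedVecs G) := by
    rw [mixedEdgeRing, mixedVecs, Set.image_union, Set.image_image, Set.image_image]
    rfl
  have haug : edgeRing k G.augment =
      Algebra.adjoin k
        ((fun z => (AddMonoidAlgebra.single z 1 : AddMonoidAlgebra k ((V ⊕ (V × V)) → ℤ))) ''
          (G.augment.rho '' ↑G.augment.edges)) := by
    rw [edgeRing, Set.image_image]
    rfl
  ext a
  simp only [Set.mem_setOf_eq, Set.mem_image, SetLike.mem_coe]
  constructor
  · rintro ⟨ha, hsupp⟩
    have key : a ∈ (mixedEdgeRing k G).map
        (AddMonoidAlgebra.mapDomainAlgHom k k (extHom (V := V))) := by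
      rw [haug] at ha
      have hsub := support_subset_closure k _ ha
      have hrepr : a = ∑ x ∈ a.coeff.support, AddMonoidAlgebra.single x (a.coeff x) :=
          (AddMonoidAlgebra.sum_coeff_single a).symm
      rw [hrepr]
      refine sum_mem fun x hx => ?_
      obtain ⟨w, hw, f, hxw⟩ := closure_aug_decomp hG (hsub hx)
      have hf : f = 0 := by
        ext d
        have h0 := hsupp x hx d
        rw [hxw] at h0
        simpa [lincomb_apply_inr] using h0
      rw [hf, map_zero, add_zero] at hxw
      have hx1 : (AddMonoidAlgebra.single x (a.coeff x) : AddMonoidAlgebra k ((V ⊕ (V × V)) → ℤ)) =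
          a.coeff x • (AddMonoidAlgebra.mapDomainAlgHom k k (extHom (V := V)))
            (AddMonoidAlgebra.single w 1) := by
        rw [hφ, AddMonoidAlgebra.mapDomain_single, ← hxw, AddMonoidAlgebra.smul_single, smul_eq_mul, mul_one]
      rw [hx1]
      refine Subalgebra.smul_mem _ (Subalgebra.mem_map.2 ⟨AddMonoidAlgebra.single w 1, ?_, rfl⟩) _
      rw [hmix]
      exact mono_mem_adjoin k _ hw
    obtain ⟨b, hb, hba⟩ := Subalgebra.mem_map.1 key
    exact ⟨b, hb, hba⟩
  · rintro ⟨b, hb, rfl⟩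
    rw [hmix] at hb
    constructor
    · clear hφ
      induction hb using Algebra.adjoin_induction with
      | mem x hx =>
          obtain ⟨z, hz, rfl⟩ := hx
          rcases hz with ⟨e, he, rfl⟩ | ⟨d, hd, rfl⟩
          · have h1 : (AddMonoidAlgebra.mapDomainAlgHom k k (extHom (V := V)))
                (AddMonoidAlgebra.single (G.sgn e • SignedGraph.endSum e) 1) =
                mono k (G.augment.rho (Sym2.map Sum.inl e)) := by
              show AddMonoidAlgebra.mapDomain _ _ = _
              rw [AddMonoidAlgebra.mapDomain_single, rho_inl]
              rfl
            rw [h1, edgeRing]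
            exact Algebra.subset_adjoin ⟨Sym2.map Sum.inl e, mem_aug_inl he, rfl⟩
          · have h1 : (AddMonoidAlgebra.mapDomainAlgHom k k (extHom (V := V)))
                (AddMonoidAlgebra.single (dirVec d) 1) =
                mono k (G.augment.rho s((Sum.inl d.1 : V ⊕ (V × V)), Sum.inr d)) *
                  mono k (G.augment.rho s((Sum.inr d : V ⊕ (V × V)), Sum.inl d.2)) := by
              show AddMonoidAlgebra.mapDomain _ _ = _
              rw [AddMonoidAlgebra.mapDomain_single, ← mono_add]
              congr 1
              rw [rho_neg hd, rho_pos hG hd, extHom_dirVec]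
              abel
            rw [h1, edgeRing]
            exact mul_mem
              (Algebra.subset_adjoin ⟨_, mem_aug_neg hd, rfl⟩)
              (Algebra.subset_adjoin ⟨_, mem_aug_pos hd, rfl⟩)
      | algebraMap r =>
          rw [AlgHom.commutes]
          exact algebraMap_mem _ r
      | add x y hx hy ihx ihy =>
          rw [map_add]
          exact add_mem ihx ihy
      | mul x y hx hy ihx ihy =>
          rw [map_mul]
          exact mul_mem ihx ihy
    · intro f hf d
      rw [hφ] at hf
      have := Finsupp.mapDomain_support (f := extHom (V := V)) (s := b.coeff) hf
      rw [Finset.mem_image] at this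
      obtain ⟨w, -, rfl⟩ := this
      rfl
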